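/- Let Y₁, Y₂ be schemes with closed subschemes Vᵢ, Wᵢ ⊂ Yᵢ (i = 1,2) defined by ideal sheaves I_i and J_i. Suppose given isomorphisms of formal completions φ_V : (Ŷ₁)_{V₁} → (Ŷ₂)_{V₂} and φ_W : (Ŷ₁)_{W₁} → (Ŷ₂)_{W₂} whose restrictions to the completions along V₁ ∩ W₁ (defined by I₁ + J₁) agree. If in each Yᵢ, for every m there exists n with (Iᵢ ∩ Jᵢ)^m ⊇ Iᵢⁿ ∩ Jᵢⁿ and Iᵢⁿ + Jᵢⁿ ⊇ (Iᵢ + Jᵢ)^k for k ≫ n, then there is an isomorphism of the formal completions along V₁ ∪ W₁ (defined by I₁ ∩ J₁) and V₂ ∪ W₂ restricting to φ_V and φ_W. -/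

import Mathlib

open Ideal.Quotient

lemma factorFactor {R : Type*} [CommRing R] {I J K : Ideal R} (h1 : I ≤ J) (h2 : J ≤ K)
    (x : R ⧸ I) :
    Ideal.Quotient.factor (S := J) (T := K) h2 (Ideal.Quotient.factor (S := I) (T := J) h1 x)
      = Ideal.Quotient.factor (S := I) (T := K) (h1.trans h2) x := by
  obtain ⟨a, rfl⟩ := Ideal.Quotient.mk_surjective x
  simp [Ideal.Quotient.factor_mk]

lemma towerGen {A₁ A₂ : Type*} [CommRing A₁] [CommRing A₂] {I₁ : Ideal A₁} {I₂ : Ideal A₂}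
    (f : ∀ n : ℕ, (A₁ ⧸ I₁ ^ n) ≃+* (A₂ ⧸ I₂ ^ n))
    (hf : ∀ n : ℕ,
      (Ideal.Quotient.factor (S := (I₂ ^ (n + 1))) (T := (I₂ ^ n))
          (Ideal.pow_le_pow_right (Nat.le_succ n))).comp (f (n + 1)).toRingHom =
        (f n).toRingHom.comp
          (Ideal.Quotient.factor (S := (I₁ ^ (n + 1))) (T := (I₁ ^ n))
            (Ideal.pow_le_pow_right (Nat.le_succ n))))
    {m n : ℕ} (h : m ≤ n) (a : A₁) :
    Ideal.Quotient.factor (S := (I₂ ^ n)) (T := (I₂ ^ m)) (Ideal.pow_le_pow_right h)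
        (f n (Ideal.Quotient.mk (I₁ ^ n) a))
      = f m (Ideal.Quotient.mk (I₁ ^ m) a) := by
  induction n, h using Nat.le_induction with
  | base =>
      obtain ⟨c, hc⟩ := Ideal.Quotient.mk_surjective (f m (Ideal.Quotient.mk (I₁ ^ m) a))
      rw [← hc, Ideal.Quotient.factor_mk]
  | succ n hmn ih =>
      have h1 : Ideal.Quotient.factor (S := (I₂ ^ (n+1))) (T := (I₂ ^ m))
          (Ideal.pow_le_pow_right (hmn.trans (Nat.le_succ n)))
          (f (n+1) (Ideal.Quotient.mk (I₁ ^ (n+1)) a))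
          = Ideal.Quotient.factor (S := (I₂ ^ n)) (T := (I₂ ^ m)) (Ideal.pow_le_pow_right hmn)
            (Ideal.Quotient.factor (S := (I₂ ^ (n+1))) (T := (I₂ ^ n)) (Ideal.pow_le_pow_right (Nat.le_succ n))
              (f (n+1) (Ideal.Quotient.mk (I₁ ^ (n+1)) a))) := by
        rw [factorFactor]
      rw [h1]
      have h2 := RingHom.congr_fun (hf n) (Ideal.Quotient.mk (I₁ ^ (n+1)) a)
      simp only [RingHom.coe_comp, Function.comp_apply, RingEquiv.toRingHom_eq_coe,
        RingHom.coe_coe, Ideal.Quotient.factor_mk] at h2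
      rw [h2, ih]

lemma towerGenSymm {A₁ A₂ : Type*} [CommRing A₁] [CommRing A₂] {I₁ : Ideal A₁} {I₂ : Ideal A₂}
    (f : ∀ n : ℕ, (A₁ ⧸ I₁ ^ n) ≃+* (A₂ ⧸ I₂ ^ n))
    (hf : ∀ n : ℕ,
      (Ideal.Quotient.factor (S := (I₂ ^ (n + 1))) (T := (I₂ ^ n))
          (Ideal.pow_le_pow_right (Nat.le_succ n))).comp (f (n + 1)).toRingHom =
        (f n).toRingHom.comp
          (Ideal.Quotient.factor (S := (I₁ ^ (n + 1))) (T := (I₁ ^ n))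
            (Ideal.pow_le_pow_right (Nat.le_succ n))))
    {m n : ℕ} (h : m ≤ n) (b : A₂) :
    Ideal.Quotient.factor (S := (I₁ ^ n)) (T := (I₁ ^ m)) (Ideal.pow_le_pow_right h)
        ((f n).symm (Ideal.Quotient.mk (I₂ ^ n) b))
      = (f m).symm (Ideal.Quotient.mk (I₂ ^ m) b) := by
  obtain ⟨a, ha⟩ := Ideal.Quotient.mk_surjective ((f n).symm (Ideal.Quotient.mk (I₂ ^ n) b))
  rw [← ha, Ideal.Quotient.factor_mk]
  have : f m (Ideal.Quotient.mk (I₁ ^ m) a) = Ideal.Quotient.mk (I₂ ^ m) b := by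
    rw [← towerGen f hf h a, ha]
    have : f n ((f n).symm (Ideal.Quotient.mk (I₂ ^ n) b)) = Ideal.Quotient.mk (I₂ ^ n) b :=
      (f n).apply_symm_apply _
    rw [this, Ideal.Quotient.factor_mk]
  rw [← this, RingEquiv.symm_apply_apply]

open Ideal.Quotient

/-- Glue two isomorphisms of quotients that agree (CRT-style compatibility data)
into an isomorphism of the quotients by the intersections. -/
lemma glueEquiv {A₁ A₂ : Type*} [CommRing A₁] [CommRing A₂]
    (P' Q' : Ideal A₁) (P Q : Ideal A₂)
    (fV : (A₁ ⧸ P') ≃+* (A₂ ⧸ P)) (fW : (A₁ ⧸ Q') ≃+* (A₂ ⧸ Q))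
    (H : ∀ a : A₁, ∃ c : A₂,
      Ideal.Quotient.mk P c = fV (Ideal.Quotient.mk P' a) ∧
      Ideal.Quotient.mk Q c = fW (Ideal.Quotient.mk Q' a))
    (H' : ∀ b : A₂, ∃ d : A₁,
      Ideal.Quotient.mk P' d = fV.symm (Ideal.Quotient.mk P b) ∧
      Ideal.Quotient.mk Q' d = fW.symm (Ideal.Quotient.mk Q b)) :
    ∃ χ : (A₁ ⧸ (P' ⊓ Q')) ≃+* (A₂ ⧸ (P ⊓ Q)),
      ∀ a : A₁, ∀ c : A₂, χ (Ideal.Quotient.mk (P' ⊓ Q') a) = Ideal.Quotient.mk (P ⊓ Q) c →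
        Ideal.Quotient.mk P c = fV (Ideal.Quotient.mk P' a) ∧
        Ideal.Quotient.mk Q c = fW (Ideal.Quotient.mk Q' a) := by
  classical
  have uniq₂ : ∀ c c' : A₂, Ideal.Quotient.mk P c = Ideal.Quotient.mk P c' →
      Ideal.Quotient.mk Q c = Ideal.Quotient.mk Q c' →
      Ideal.Quotient.mk (P ⊓ Q) c = Ideal.Quotient.mk (P ⊓ Q) c' := by
    intro c c' h1 h2
    rw [Ideal.Quotient.eq] at h1 h2 ⊢
    exact ⟨h1, h2⟩
  set g : A₁ → A₂ ⧸ (P ⊓ Q) := fun a => Ideal.Quotient.mk _ (H a).choose with hg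
  have gspec : ∀ (a : A₁) (c : A₂),
      Ideal.Quotient.mk P c = fV (Ideal.Quotient.mk P' a) →
      Ideal.Quotient.mk Q c = fW (Ideal.Quotient.mk Q' a) →
      g a = Ideal.Quotient.mk (P ⊓ Q) c := fun a c h1 h2 =>
    uniq₂ _ _ ((H a).choose_spec.1.trans h1.symm) ((H a).choose_spec.2.trans h2.symm)
  set g' : A₂ → A₁ ⧸ (P' ⊓ Q') := fun b => Ideal.Quotient.mk _ (H' b).choose with hg'
  have uniq₁ : ∀ d d' : A₁, Ideal.Quotient.mk P' d = Ideal.Quotient.mk P' d' →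
      Ideal.Quotient.mk Q' d = Ideal.Quotient.mk Q' d' →
      Ideal.Quotient.mk (P' ⊓ Q') d = Ideal.Quotient.mk (P' ⊓ Q') d' := by
    intro d d' h1 h2
    rw [Ideal.Quotient.eq] at h1 h2 ⊢
    exact ⟨h1, h2⟩
  have g'spec : ∀ (b : A₂) (d : A₁),
      Ideal.Quotient.mk P' d = fV.symm (Ideal.Quotient.mk P b) →
      Ideal.Quotient.mk Q' d = fW.symm (Ideal.Quotient.mk Q b) →
      g' b = Ideal.Quotient.mk (P' ⊓ Q') d := fun b d h1 h2 =>
    uniq₁ _ _ ((H' b).choose_spec.1.trans h1.symm) ((H' b).choose_spec.2.trans h2.symm)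
  let G : A₁ →+* A₂ ⧸ (P ⊓ Q) :=
    { toFun := g
      map_one' := by
        rw [gspec 1 1 (by simp) (by simp)]; simp
      map_mul' := by
        intro x y
        show g (x * y) = g x * g y
        rw [gspec x _ (H x).choose_spec.1 (H x).choose_spec.2,
          gspec y _ (H y).choose_spec.1 (H y).choose_spec.2,
          gspec (x * y) ((H x).choose * (H y).choose)
            (by rw [map_mul, (H x).choose_spec.1, (H y).choose_spec.1, ← map_mul, ← map_mul])
            (by rw [map_mul, (H x).choose_spec.2, (H y).choose_spec.2, ← map_mul, ← map_mul]),
          map_mul]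
      map_zero' := by
        show g 0 = 0
        rw [gspec 0 0 (by simp) (by simp)]; simp
      map_add' := by
        intro x y
        show g (x + y) = g x + g y
        rw [gspec x _ (H x).choose_spec.1 (H x).choose_spec.2,
          gspec y _ (H y).choose_spec.1 (H y).choose_spec.2,
          gspec (x + y) ((H x).choose + (H y).choose)
            (by rw [map_add, (H x).choose_spec.1, (H y).choose_spec.1, ← map_add, ← map_add])
            (by rw [map_add, (H x).choose_spec.2, (H y).choose_spec.2, ← map_add, ← map_add]),
          map_add] }
  let G' : A₂ →+* A₁ ⧸ (P' ⊓ Q') :=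
    { toFun := g'
      map_one' := by
        rw [g'spec 1 1 (by simp) (by simp)]; simp
      map_mul' := by
        intro x y
        show g' (x * y) = g' x * g' y
        rw [g'spec x _ (H' x).choose_spec.1 (H' x).choose_spec.2,
          g'spec y _ (H' y).choose_spec.1 (H' y).choose_spec.2,
          g'spec (x * y) ((H' x).choose * (H' y).choose)
            (by rw [map_mul, (H' x).choose_spec.1, (H' y).choose_spec.1, ← map_mul, ← map_mul])
            (by rw [map_mul, (H' x).choose_spec.2, (H' y).choose_spec.2, ← map_mul, ← map_mul]),
          map_mul]
      map_zero' := by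
        show g' 0 = 0
        rw [g'spec 0 0 (by simp) (by simp)]; simp
      map_add' := by
        intro x y
        show g' (x + y) = g' x + g' y
        rw [g'spec x _ (H' x).choose_spec.1 (H' x).choose_spec.2,
          g'spec y _ (H' y).choose_spec.1 (H' y).choose_spec.2,
          g'spec (x + y) ((H' x).choose + (H' y).choose)
            (by rw [map_add, (H' x).choose_spec.1, (H' y).choose_spec.1, ← map_add, ← map_add])
            (by rw [map_add, (H' x).choose_spec.2, (H' y).choose_spec.2, ← map_add, ← map_add]),
          map_add] }
  have hker : ∀ a ∈ P' ⊓ Q', G a = 0 := by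
    intro a ha
    show g a = 0
    rw [gspec a 0 (by
        rw [map_zero, Ideal.Quotient.eq_zero_iff_mem.2 ha.1, map_zero])
      (by rw [map_zero, Ideal.Quotient.eq_zero_iff_mem.2 ha.2, map_zero])]
    simp
  have hker' : ∀ b ∈ P ⊓ Q, G' b = 0 := by
    intro b hb
    show g' b = 0
    rw [g'spec b 0 (by
        rw [map_zero, Ideal.Quotient.eq_zero_iff_mem.2 hb.1, map_zero])
      (by rw [map_zero, Ideal.Quotient.eq_zero_iff_mem.2 hb.2, map_zero])]
    simp
  let χhom : A₁ ⧸ (P' ⊓ Q') →+* A₂ ⧸ (P ⊓ Q) := Ideal.Quotient.lift _ G hker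
  let χ'hom : A₂ ⧸ (P ⊓ Q) →+* A₁ ⧸ (P' ⊓ Q') := Ideal.Quotient.lift _ G' hker'
  have hχmk : ∀ a : A₁, χhom (Ideal.Quotient.mk _ a) = g a := fun a =>
    Ideal.Quotient.lift_mk _ _ _
  have hχ'mk : ∀ b : A₂, χ'hom (Ideal.Quotient.mk _ b) = g' b := fun b =>
    Ideal.Quotient.lift_mk _ _ _
  have hcomp1 : χhom.comp χ'hom = RingHom.id _ := by
    refine Ideal.Quotient.ringHom_ext (RingHom.ext fun b => ?_)
    simp only [RingHom.coe_comp, Function.comp_apply, RingHom.id_apply]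
    rw [hχ'mk b]
    show χhom (Ideal.Quotient.mk _ (H' b).choose) = _
    rw [hχmk]
    rw [gspec _ _ (H _).choose_spec.1 (H _).choose_spec.2]
    refine uniq₂ _ _ ?_ ?_
    · rw [(H _).choose_spec.1, (H' b).choose_spec.1, RingEquiv.apply_symm_apply]
    · rw [(H _).choose_spec.2, (H' b).choose_spec.2, RingEquiv.apply_symm_apply]
  have hcomp2 : χ'hom.comp χhom = RingHom.id _ := by
    refine Ideal.Quotient.ringHom_ext (RingHom.ext fun a => ?_)
    simp only [RingHom.coe_comp, Function.comp_apply, RingHom.id_apply]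
    rw [hχmk a]
    show χ'hom (Ideal.Quotient.mk _ (H a).choose) = _
    rw [hχ'mk]
    rw [g'spec _ _ (H' _).choose_spec.1 (H' _).choose_spec.2]
    refine uniq₁ _ _ ?_ ?_
    · rw [(H' _).choose_spec.1, (H a).choose_spec.1, RingEquiv.symm_apply_apply]
    · rw [(H' _).choose_spec.2, (H a).choose_spec.2, RingEquiv.symm_apply_apply]
  refine ⟨RingEquiv.ofRingHom χhom χ'hom hcomp1 hcomp2, ?_⟩
  intro a c hac
  have h1 : χhom (Ideal.Quotient.mk _ a) = Ideal.Quotient.mk (P ⊓ Q) c := hac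
  rw [hχmk a, gspec _ _ (H a).choose_spec.1 (H a).choose_spec.2, Ideal.Quotient.eq] at h1
  constructor
  · rw [← (H a).choose_spec.1, Ideal.Quotient.eq]
    simpa [neg_sub] using P.neg_mem h1.1
  · rw [← (H a).choose_spec.2, Ideal.Quotient.eq]
    simpa [neg_sub] using Q.neg_mem h1.2

lemma descendEquiv {A₁ A₂ : Type*} [CommRing A₁] [CommRing A₂]
    (K₁ M₁ : Ideal A₁) (K₂ M₂ : Ideal A₂) (hK₁ : K₁ ≤ M₁) (hK₂ : K₂ ≤ M₂)
    (χ : (A₁ ⧸ K₁) ≃+* (A₂ ⧸ K₂))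
    (hfwd : ∀ a ∈ M₁, ∀ c : A₂, χ (Ideal.Quotient.mk K₁ a) = Ideal.Quotient.mk K₂ c → c ∈ M₂)
    (hbwd : ∀ b ∈ M₂, ∀ d : A₁, χ.symm (Ideal.Quotient.mk K₂ b) = Ideal.Quotient.mk K₁ d → d ∈ M₁) :
    ∃ ψ : (A₁ ⧸ M₁) ≃+* (A₂ ⧸ M₂),
      ∀ (a : A₁) (c : A₂), χ (Ideal.Quotient.mk K₁ a) = Ideal.Quotient.mk K₂ c →
        ψ (Ideal.Quotient.mk M₁ a) = Ideal.Quotient.mk M₂ c := by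
  classical
  let F : A₁ →+* A₂ ⧸ M₂ :=
    (Ideal.Quotient.factor (S := K₂) (T := M₂) hK₂).comp (χ.toRingHom.comp (Ideal.Quotient.mk K₁))
  have hFmk : ∀ (a : A₁) (c : A₂), χ (Ideal.Quotient.mk K₁ a) = Ideal.Quotient.mk K₂ c →
      F a = Ideal.Quotient.mk M₂ c := by
    intro a c h
    show Ideal.Quotient.factor (S := K₂) (T := M₂) hK₂ (χ (Ideal.Quotient.mk K₁ a)) = _
    rw [h, Ideal.Quotient.factor_mk]
  let F' : A₂ →+* A₁ ⧸ M₁ :=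
    (Ideal.Quotient.factor (S := K₁) (T := M₁) hK₁).comp (χ.symm.toRingHom.comp (Ideal.Quotient.mk K₂))
  have hF'mk : ∀ (b : A₂) (d : A₁), χ.symm (Ideal.Quotient.mk K₂ b) = Ideal.Quotient.mk K₁ d →
      F' b = Ideal.Quotient.mk M₁ d := by
    intro b d h
    show Ideal.Quotient.factor (S := K₁) (T := M₁) hK₁ (χ.symm (Ideal.Quotient.mk K₂ b)) = _
    rw [h, Ideal.Quotient.factor_mk]
  have hFker : ∀ a ∈ M₁, F a = 0 := by
    intro a ha
    obtain ⟨c, hc⟩ := Ideal.Quotient.mk_surjective (χ (Ideal.Quotient.mk K₁ a))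
    rw [hFmk a c hc.symm]
    exact Ideal.Quotient.eq_zero_iff_mem.2 (hfwd a ha c hc.symm)
  have hF'ker : ∀ b ∈ M₂, F' b = 0 := by
    intro b hb
    obtain ⟨d, hd⟩ := Ideal.Quotient.mk_surjective (χ.symm (Ideal.Quotient.mk K₂ b))
    rw [hF'mk b d hd.symm]
    exact Ideal.Quotient.eq_zero_iff_mem.2 (hbwd b hb d hd.symm)
  let ψhom := Ideal.Quotient.lift M₁ F hFker
  let ψ'hom := Ideal.Quotient.lift M₂ F' hF'ker
  have hcomp1 : ψhom.comp ψ'hom = RingHom.id _ := by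
    refine Ideal.Quotient.ringHom_ext (RingHom.ext fun b => ?_)
    simp only [RingHom.coe_comp, Function.comp_apply, RingHom.id_apply]
    obtain ⟨d, hd⟩ := Ideal.Quotient.mk_surjective (χ.symm (Ideal.Quotient.mk K₂ b))
    have h1 : ψ'hom (Ideal.Quotient.mk M₂ b) = Ideal.Quotient.mk M₁ d := by
      show F' b = _
      exact hF'mk b d hd.symm
    rw [h1]
    have h2 : χ (Ideal.Quotient.mk K₁ d) = Ideal.Quotient.mk K₂ b := by
      rw [hd, RingEquiv.apply_symm_apply]
    show F d = _
    rw [hFmk d b h2]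
  have hcomp2 : ψ'hom.comp ψhom = RingHom.id _ := by
    refine Ideal.Quotient.ringHom_ext (RingHom.ext fun a => ?_)
    simp only [RingHom.coe_comp, Function.comp_apply, RingHom.id_apply]
    obtain ⟨c, hc⟩ := Ideal.Quotient.mk_surjective (χ (Ideal.Quotient.mk K₁ a))
    have h1 : ψhom (Ideal.Quotient.mk M₁ a) = Ideal.Quotient.mk M₂ c := by
      show F a = _
      exact hFmk a c hc.symm
    rw [h1]
    have h2 : χ.symm (Ideal.Quotient.mk K₂ c) = Ideal.Quotient.mk K₁ a := by
      rw [hc, RingEquiv.symm_apply_apply]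
    show F' c = _
    rw [hF'mk c a h2]
  refine ⟨RingEquiv.ofRingHom ψhom ψ'hom hcomp1 hcomp2, ?_⟩
  intro a c h
  show ψhom (Ideal.Quotient.mk M₁ a) = _
  show F a = _
  exact hFmk a c h



/-- Formal completions of a scheme along closed subschemes `V`, `W`, `V ∩ W`,
`V ∪ W` (defined by ideals `I`, `J`, `I + J`, `I ∩ J`) are encoded by the towers
of quotients `A ⧸ Iⁿ`, `A ⧸ Jⁿ`, `A ⧸ (I+J)ⁿ`, `A ⧸ (I⊓J)ⁿ`.  Suppose given
compatible towers of isomorphisms `φV : A₁⧸I₁ⁿ ≅ A₂⧸I₂ⁿ` and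
`φW : A₁⧸J₁ⁿ ≅ A₂⧸J₂ⁿ` whose restrictions to the completions along `V ∩ W`
agree (i.e. both are compatible with one tower `φ : A₁⧸(I₁+J₁)ⁿ ≅ A₂⧸(I₂+J₂)ⁿ`).
If moreover in each ring, for every `m` there is `n` with `Iⁿ ⊓ Jⁿ ⊆ (I⊓J)^m`,
and for every `n` one has `(I+J)^k ⊆ Iⁿ + Jⁿ` for `k ≫ n`, then there is a tower
of isomorphisms `ψ : A₁⧸(I₁⊓J₁)ⁿ ≅ A₂⧸(I₂⊓J₂)ⁿ` (an isomorphism of the formal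
completions along `V ∪ W`) restricting to `φV` and `φW`. -/
theorem stmt12 (A₁ A₂ : Type*) [CommRing A₁] [CommRing A₂]
    (I₁ J₁ : Ideal A₁) (I₂ J₂ : Ideal A₂)
    (φV : ∀ n : ℕ, (A₁ ⧸ I₁ ^ n) ≃+* (A₂ ⧸ I₂ ^ n))
    (φW : ∀ n : ℕ, (A₁ ⧸ J₁ ^ n) ≃+* (A₂ ⧸ J₂ ^ n))
    (hVtower : ∀ n : ℕ,
      (Ideal.Quotient.factor (S := (I₂ ^ (n + 1))) (T := (I₂ ^ n))
          (Ideal.pow_le_pow_right (Nat.le_succ n))).comp (φV (n + 1)).toRingHom =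
        (φV n).toRingHom.comp
          (Ideal.Quotient.factor (S := (I₁ ^ (n + 1))) (T := (I₁ ^ n))
            (Ideal.pow_le_pow_right (Nat.le_succ n))))
    (hWtower : ∀ n : ℕ,
      (Ideal.Quotient.factor (S := (J₂ ^ (n + 1))) (T := (J₂ ^ n))
          (Ideal.pow_le_pow_right (Nat.le_succ n))).comp (φW (n + 1)).toRingHom =
        (φW n).toRingHom.comp
          (Ideal.Quotient.factor (S := (J₁ ^ (n + 1))) (T := (J₁ ^ n))
            (Ideal.pow_le_pow_right (Nat.le_succ n))))
    (hAgree : ∃ φ : ∀ n : ℕ, (A₁ ⧸ (I₁ + J₁) ^ n) ≃+* (A₂ ⧸ (I₂ + J₂) ^ n),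
      ∀ n : ℕ,
        (Ideal.Quotient.factor (S := (I₂ ^ n)) (T := ((I₂ + J₂) ^ n))
            (Ideal.pow_right_mono le_sup_left n)).comp (φV n).toRingHom =
          (φ n).toRingHom.comp
            (Ideal.Quotient.factor (S := (I₁ ^ n)) (T := ((I₁ + J₁) ^ n))
              (Ideal.pow_right_mono le_sup_left n)) ∧
        (Ideal.Quotient.factor (S := (J₂ ^ n)) (T := ((I₂ + J₂) ^ n))
            (Ideal.pow_right_mono le_sup_right n)).comp (φW n).toRingHom =
          (φ n).toRingHom.comp
            (Ideal.Quotient.factor (S := (J₁ ^ n)) (T := ((I₁ + J₁) ^ n))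
              (Ideal.pow_right_mono le_sup_right n)))
    (hc₁ : ∀ m : ℕ, ∃ n : ℕ, I₁ ^ n ⊓ J₁ ^ n ≤ (I₁ ⊓ J₁) ^ m)
    (hc₂ : ∀ m : ℕ, ∃ n : ℕ, I₂ ^ n ⊓ J₂ ^ n ≤ (I₂ ⊓ J₂) ^ m)
    (hk₁ : ∀ n : ℕ, ∃ k₀ : ℕ, ∀ k : ℕ, k₀ ≤ k → (I₁ + J₁) ^ k ≤ I₁ ^ n + J₁ ^ n)
    (hk₂ : ∀ n : ℕ, ∃ k₀ : ℕ, ∀ k : ℕ, k₀ ≤ k → (I₂ + J₂) ^ k ≤ I₂ ^ n + J₂ ^ n) :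
    ∃ ψ : ∀ n : ℕ, (A₁ ⧸ (I₁ ⊓ J₁) ^ n) ≃+* (A₂ ⧸ (I₂ ⊓ J₂) ^ n),
      (∀ n : ℕ,
        (Ideal.Quotient.factor (S := ((I₂ ⊓ J₂) ^ (n + 1))) (T := ((I₂ ⊓ J₂) ^ n))
            (Ideal.pow_le_pow_right (Nat.le_succ n))).comp (ψ (n + 1)).toRingHom =
          (ψ n).toRingHom.comp
            (Ideal.Quotient.factor (S := ((I₁ ⊓ J₁) ^ (n + 1))) (T := ((I₁ ⊓ J₁) ^ n))
              (Ideal.pow_le_pow_right (Nat.le_succ n)))) ∧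
      (∀ n : ℕ,
        (φV n).toRingHom.comp
            (Ideal.Quotient.factor (S := ((I₁ ⊓ J₁) ^ n)) (T := (I₁ ^ n))
              (Ideal.pow_right_mono inf_le_left n)) =
          (Ideal.Quotient.factor (S := ((I₂ ⊓ J₂) ^ n)) (T := (I₂ ^ n))
              (Ideal.pow_right_mono inf_le_left n)).comp (ψ n).toRingHom) ∧
      (∀ n : ℕ,
        (φW n).toRingHom.comp
            (Ideal.Quotient.factor (S := ((I₁ ⊓ J₁) ^ n)) (T := (J₁ ^ n))
              (Ideal.pow_right_mono inf_le_right n)) =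
          (Ideal.Quotient.factor (S := ((I₂ ⊓ J₂) ^ n)) (T := (J₂ ^ n))
              (Ideal.pow_right_mono inf_le_right n)).comp (ψ n).toRingHom) := by
  classical
  obtain ⟨φ, hφ⟩ := hAgree
  -- Step 1: CRT-glueing data, forward direction
  have H2 : ∀ (n : ℕ) (a : A₁), ∃ c : A₂,
      Ideal.Quotient.mk (I₂ ^ n) c = φV n (Ideal.Quotient.mk (I₁ ^ n) a) ∧
      Ideal.Quotient.mk (J₂ ^ n) c = φW n (Ideal.Quotient.mk (J₁ ^ n) a) := by
    intro n a
    obtain ⟨k₀, hk⟩ := hk₂ n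
    set k := max k₀ n with hkdef
    have hkn : n ≤ k := le_max_right _ _
    have h1 : (I₂ + J₂) ^ k ≤ I₂ ^ n + J₂ ^ n := hk k (le_max_left _ _)
    obtain ⟨u, hu⟩ := Ideal.Quotient.mk_surjective (φV k (Ideal.Quotient.mk (I₁ ^ k) a))
    obtain ⟨v, hv⟩ := Ideal.Quotient.mk_surjective (φW k (Ideal.Quotient.mk (J₁ ^ k) a))
    have hagree : Ideal.Quotient.mk ((I₂ + J₂) ^ k) u = Ideal.Quotient.mk ((I₂ + J₂) ^ k) v := by
      have e1 := RingHom.congr_fun (hφ k).1 (Ideal.Quotient.mk (I₁ ^ k) a)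
      have e2 := RingHom.congr_fun (hφ k).2 (Ideal.Quotient.mk (J₁ ^ k) a)
      simp only [RingHom.coe_comp, Function.comp_apply, RingEquiv.toRingHom_eq_coe,
        RingHom.coe_coe, Ideal.Quotient.factor_mk] at e1 e2
      calc Ideal.Quotient.mk ((I₂ + J₂) ^ k) u
          = Ideal.Quotient.factor (S := (I₂ ^ k)) (T := ((I₂ + J₂) ^ k))
              (Ideal.pow_right_mono le_sup_left k) (Ideal.Quotient.mk (I₂ ^ k) u) := by
            rw [Ideal.Quotient.factor_mk]
        _ = Ideal.Quotient.factor (S := (I₂ ^ k)) (T := ((I₂ + J₂) ^ k))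
              (Ideal.pow_right_mono le_sup_left k) (φV k (Ideal.Quotient.mk (I₁ ^ k) a)) := by
            rw [hu]
        _ = φ k (Ideal.Quotient.mk ((I₁ + J₁) ^ k) a) := e1
        _ = Ideal.Quotient.factor (S := (J₂ ^ k)) (T := ((I₂ + J₂) ^ k))
              (Ideal.pow_right_mono le_sup_right k) (φW k (Ideal.Quotient.mk (J₁ ^ k) a)) :=
            e2.symm
        _ = Ideal.Quotient.mk ((I₂ + J₂) ^ k) v := by rw [← hv, Ideal.Quotient.factor_mk]
    have huv : u - v ∈ I₂ ^ n + J₂ ^ n := h1 (Ideal.Quotient.eq.1 hagree)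
    rw [Submodule.add_eq_sup] at huv
    obtain ⟨x, hx, y, hy, hxy⟩ := Submodule.mem_sup.1 huv
    refine ⟨u - x, ?_, ?_⟩
    · have h2 : Ideal.Quotient.mk (I₂ ^ n) (u - x) = Ideal.Quotient.mk (I₂ ^ n) u := by
        rw [Ideal.Quotient.eq]
        simpa using (I₂ ^ n).neg_mem hx
      rw [h2, ← towerGen φV hVtower hkn a, ← hu, Ideal.Quotient.factor_mk]
    · have hvy : u - x = v + y := by linear_combination -hxy
      have h2 : Ideal.Quotient.mk (J₂ ^ n) (u - x) = Ideal.Quotient.mk (J₂ ^ n) v := by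
        rw [hvy, Ideal.Quotient.eq]
        simpa using hy
      rw [h2, ← towerGen φW hWtower hkn a, ← hv, Ideal.Quotient.factor_mk]
  -- Step 1': CRT-glueing data, backward direction
  have H1 : ∀ (n : ℕ) (b : A₂), ∃ d : A₁,
      Ideal.Quotient.mk (I₁ ^ n) d = (φV n).symm (Ideal.Quotient.mk (I₂ ^ n) b) ∧
      Ideal.Quotient.mk (J₁ ^ n) d = (φW n).symm (Ideal.Quotient.mk (J₂ ^ n) b) := by
    intro n b
    obtain ⟨k₀, hk⟩ := hk₁ n
    set k := max k₀ n with hkdef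
    have hkn : n ≤ k := le_max_right _ _
    have h1 : (I₁ + J₁) ^ k ≤ I₁ ^ n + J₁ ^ n := hk k (le_max_left _ _)
    obtain ⟨u, hu⟩ := Ideal.Quotient.mk_surjective ((φV k).symm (Ideal.Quotient.mk (I₂ ^ k) b))
    obtain ⟨v, hv⟩ := Ideal.Quotient.mk_surjective ((φW k).symm (Ideal.Quotient.mk (J₂ ^ k) b))
    have hagree : Ideal.Quotient.mk ((I₁ + J₁) ^ k) u = Ideal.Quotient.mk ((I₁ + J₁) ^ k) v := by
      have e1 := RingHom.congr_fun (hφ k).1 (Ideal.Quotient.mk (I₁ ^ k) u)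
      have e2 := RingHom.congr_fun (hφ k).2 (Ideal.Quotient.mk (J₁ ^ k) v)
      simp only [RingHom.coe_comp, Function.comp_apply, RingEquiv.toRingHom_eq_coe,
        RingHom.coe_coe, Ideal.Quotient.factor_mk] at e1 e2
      rw [hu, RingEquiv.apply_symm_apply, Ideal.Quotient.factor_mk] at e1
      rw [hv, RingEquiv.apply_symm_apply, Ideal.Quotient.factor_mk] at e2
      have := e1.symm.trans e2
      exact (φ k).injective this
    have huv : u - v ∈ I₁ ^ n + J₁ ^ n := h1 (Ideal.Quotient.eq.1 hagree)
    rw [Submodule.add_eq_sup] at huv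
    obtain ⟨x, hx, y, hy, hxy⟩ := Submodule.mem_sup.1 huv
    refine ⟨u - x, ?_, ?_⟩
    · have h2 : Ideal.Quotient.mk (I₁ ^ n) (u - x) = Ideal.Quotient.mk (I₁ ^ n) u := by
        rw [Ideal.Quotient.eq]
        simpa using (I₁ ^ n).neg_mem hx
      rw [h2, ← towerGenSymm φV hVtower hkn b, ← hu, Ideal.Quotient.factor_mk]
    · have hvy : u - x = v + y := by linear_combination -hxy
      have h2 : Ideal.Quotient.mk (J₁ ^ n) (u - x) = Ideal.Quotient.mk (J₁ ^ n) v := by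
        rw [hvy, Ideal.Quotient.eq]
        simpa using hy
      rw [h2, ← towerGenSymm φW hWtower hkn b, ← hv, Ideal.Quotient.factor_mk]
  -- Step 2: glue to isomorphisms on quotients by `I^n ⊓ J^n`
  have hglue : ∀ n : ℕ, ∃ χ : (A₁ ⧸ (I₁ ^ n ⊓ J₁ ^ n)) ≃+* (A₂ ⧸ (I₂ ^ n ⊓ J₂ ^ n)),
      ∀ (a : A₁) (c : A₂),
        χ (Ideal.Quotient.mk (I₁ ^ n ⊓ J₁ ^ n) a) = Ideal.Quotient.mk (I₂ ^ n ⊓ J₂ ^ n) c →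
        Ideal.Quotient.mk (I₂ ^ n) c = φV n (Ideal.Quotient.mk (I₁ ^ n) a) ∧
        Ideal.Quotient.mk (J₂ ^ n) c = φW n (Ideal.Quotient.mk (J₁ ^ n) a) :=
    fun n => glueEquiv _ _ _ _ (φV n) (φW n) (H2 n) (H1 n)
  choose χ hχ using hglue
  -- symm version of hχ
  have hχs : ∀ (n : ℕ) (b : A₂) (d : A₁),
      (χ n).symm (Ideal.Quotient.mk (I₂ ^ n ⊓ J₂ ^ n) b) =
        Ideal.Quotient.mk (I₁ ^ n ⊓ J₁ ^ n) d →
      Ideal.Quotient.mk (I₁ ^ n) d = (φV n).symm (Ideal.Quotient.mk (I₂ ^ n) b) ∧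
      Ideal.Quotient.mk (J₁ ^ n) d = (φW n).symm (Ideal.Quotient.mk (J₂ ^ n) b) := by
    intro n b d h
    have h' : χ n (Ideal.Quotient.mk (I₁ ^ n ⊓ J₁ ^ n) d) =
        Ideal.Quotient.mk (I₂ ^ n ⊓ J₂ ^ n) b := by
      rw [← h, RingEquiv.apply_symm_apply]
    obtain ⟨e1, e2⟩ := hχ n d b h'
    exact ⟨by rw [e1, RingEquiv.symm_apply_apply], by rw [e2, RingEquiv.symm_apply_apply]⟩
  -- Step 3: the monotone level function
  choose w₁ hw₁ using hc₁
  choose w₂ hw₂ using hc₂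
  set w : ℕ → ℕ := fun m => max (max (w₁ m) (w₂ m)) (m + 1) with hwdef
  set N : ℕ → ℕ := fun m => (Finset.range (m + 1)).sup w with hNdef
  have hNw : ∀ m, w m ≤ N m := fun m =>
    Finset.le_sup (Finset.self_mem_range_succ m)
  have hNmono : ∀ m m', m ≤ m' → N m ≤ N m' := fun m m' h =>
    Finset.sup_mono (Finset.range_subset_range.2 (by omega))
  have hNm : ∀ m, m + 1 ≤ N m := fun m => le_trans (le_max_right _ _) (hNw m)
  have hN1 : ∀ m, 1 ≤ N m := fun m => le_trans (by omega) (hNm m)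
  have hNge : ∀ m, m ≤ N m := fun m => le_trans (by omega) (hNm m)
  have hN₁ : ∀ m, I₁ ^ (N m) ⊓ J₁ ^ (N m) ≤ (I₁ ⊓ J₁) ^ m := by
    intro m
    have h1 : w₁ m ≤ N m := le_trans (le_trans (le_max_left _ _) (le_max_left _ _)) (hNw m)
    exact le_trans (inf_le_inf (Ideal.pow_le_pow_right h1) (Ideal.pow_le_pow_right h1)) (hw₁ m)
  have hN₂ : ∀ m, I₂ ^ (N m) ⊓ J₂ ^ (N m) ≤ (I₂ ⊓ J₂) ^ m := by
    intro m
    have h1 : w₂ m ≤ N m := le_trans (le_trans (le_max_right _ _) (le_max_left _ _)) (hNw m)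
    exact le_trans (inf_le_inf (Ideal.pow_le_pow_right h1) (Ideal.pow_le_pow_right h1)) (hw₂ m)
  -- membership in ideal `I` (power one) from χ-compatibility
  have memI₂ : ∀ (n : ℕ), 1 ≤ n → ∀ (x : A₁), x ∈ I₁ ⊓ J₁ → ∀ c : A₂,
      χ n (Ideal.Quotient.mk (I₁ ^ n ⊓ J₁ ^ n) x) = Ideal.Quotient.mk (I₂ ^ n ⊓ J₂ ^ n) c →
      c ∈ I₂ ⊓ J₂ := by
    intro n hn x hx c hc
    obtain ⟨e1, e2⟩ := hχ n x c hc
    constructor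
    · have hx1 : Ideal.Quotient.mk (I₁ ^ 1) x = 0 :=
        Ideal.Quotient.eq_zero_iff_mem.2 (by simpa [pow_one] using hx.1)
      have : Ideal.Quotient.mk (I₂ ^ 1) c = 0 := by
        have h3 := towerGen φV hVtower hn x
        rw [← Ideal.Quotient.factor_mk (S := (I₂ ^ n)) (T := (I₂ ^ 1)) (Ideal.pow_le_pow_right hn) c, e1,
          h3, hx1, map_zero]
      rw [← pow_one I₂]
      exact Ideal.Quotient.eq_zero_iff_mem.1 this
    · have hx1 : Ideal.Quotient.mk (J₁ ^ 1) x = 0 :=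
        Ideal.Quotient.eq_zero_iff_mem.2 (by simpa [pow_one] using hx.2)
      have : Ideal.Quotient.mk (J₂ ^ 1) c = 0 := by
        have h3 := towerGen φW hWtower hn x
        rw [← Ideal.Quotient.factor_mk (S := (J₂ ^ n)) (T := (J₂ ^ 1)) (Ideal.pow_le_pow_right hn) c, e2,
          h3, hx1, map_zero]
      rw [← pow_one J₂]
      exact Ideal.Quotient.eq_zero_iff_mem.1 this
  have memI₁ : ∀ (n : ℕ), 1 ≤ n → ∀ (x : A₂), x ∈ I₂ ⊓ J₂ → ∀ d : A₁,
      (χ n).symm (Ideal.Quotient.mk (I₂ ^ n ⊓ J₂ ^ n) x) =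
        Ideal.Quotient.mk (I₁ ^ n ⊓ J₁ ^ n) d →
      d ∈ I₁ ⊓ J₁ := by
    intro n hn x hx d hd
    obtain ⟨e1, e2⟩ := hχs n x d hd
    constructor
    · have hx1 : Ideal.Quotient.mk (I₂ ^ 1) x = 0 :=
        Ideal.Quotient.eq_zero_iff_mem.2 (by simpa [pow_one] using hx.1)
      have : Ideal.Quotient.mk (I₁ ^ 1) d = 0 := by
        have h3 := towerGenSymm φV hVtower hn x
        rw [← Ideal.Quotient.factor_mk (S := (I₁ ^ n)) (T := (I₁ ^ 1)) (Ideal.pow_le_pow_right hn) d, e1,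
          h3, hx1, map_zero]
      rw [← pow_one I₁]
      exact Ideal.Quotient.eq_zero_iff_mem.1 this
    · have hx1 : Ideal.Quotient.mk (J₂ ^ 1) x = 0 :=
        Ideal.Quotient.eq_zero_iff_mem.2 (by simpa [pow_one] using hx.2)
      have : Ideal.Quotient.mk (J₁ ^ 1) d = 0 := by
        have h3 := towerGenSymm φW hWtower hn x
        rw [← Ideal.Quotient.factor_mk (S := (J₁ ^ n)) (T := (J₁ ^ 1)) (Ideal.pow_le_pow_right hn) d, e2,
          h3, hx1, map_zero]
      rw [← pow_one J₁]
      exact Ideal.Quotient.eq_zero_iff_mem.1 this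
  -- Step 4: descend each χ (N m) to the quotients by (I⊓J)^m
  have hdesc : ∀ m : ℕ, ∃ ψ : (A₁ ⧸ (I₁ ⊓ J₁) ^ m) ≃+* (A₂ ⧸ (I₂ ⊓ J₂) ^ m),
      ∀ (a : A₁) (c : A₂),
        χ (N m) (Ideal.Quotient.mk (I₁ ^ (N m) ⊓ J₁ ^ (N m)) a) =
          Ideal.Quotient.mk (I₂ ^ (N m) ⊓ J₂ ^ (N m)) c →
        ψ (Ideal.Quotient.mk ((I₁ ⊓ J₁) ^ m) a) = Ideal.Quotient.mk ((I₂ ⊓ J₂) ^ m) c := by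
    intro m
    set n := N m with hn
    have hK₁ : I₁ ^ n ⊓ J₁ ^ n ≤ (I₁ ⊓ J₁) ^ m := hN₁ m
    have hK₂ : I₂ ^ n ⊓ J₂ ^ n ≤ (I₂ ⊓ J₂) ^ m := hN₂ m
    refine descendEquiv _ _ _ _ hK₁ hK₂ (χ n) ?_ ?_
    · -- forward
      intro a ha c hc
      set g : A₁ →+* A₂ ⧸ (I₂ ^ n ⊓ J₂ ^ n) :=
        (χ n).toRingHom.comp (Ideal.Quotient.mk (I₁ ^ n ⊓ J₁ ^ n)) with hgdef
      have hgapp : ∀ z : A₁, g z = χ n (Ideal.Quotient.mk (I₁ ^ n ⊓ J₁ ^ n) z) := fun z => rfl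
      have step1 : Ideal.map g (I₁ ⊓ J₁) ≤
          Ideal.map (Ideal.Quotient.mk (I₂ ^ n ⊓ J₂ ^ n)) (I₂ ⊓ J₂) := by
        rw [Ideal.map_le_iff_le_comap]
        intro x hx
        rw [Ideal.mem_comap]
        obtain ⟨c₀, hc₀⟩ :=
          Ideal.Quotient.mk_surjective (χ n (Ideal.Quotient.mk (I₁ ^ n ⊓ J₁ ^ n) x))
        have hc₀m : c₀ ∈ I₂ ⊓ J₂ := memI₂ n (hN1 m) x hx c₀ hc₀.symm
        rw [hgapp, ← hc₀]
        exact Ideal.mem_map_of_mem _ hc₀m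
      have step2 : g a ∈ Ideal.map (Ideal.Quotient.mk (I₂ ^ n ⊓ J₂ ^ n)) ((I₂ ⊓ J₂) ^ m) := by
        have h4 : g a ∈ Ideal.map g ((I₁ ⊓ J₁) ^ m) := Ideal.mem_map_of_mem _ ha
        rw [Ideal.map_pow] at h4
        have h5 := Ideal.pow_right_mono step1 m h4
        rwa [← Ideal.map_pow] at h5
      rw [hgapp, hc] at step2
      obtain ⟨x, hxm, hxc⟩ := (Ideal.mem_map_iff_of_surjective _
        Ideal.Quotient.mk_surjective).1 step2
      have h6 : x - c ∈ I₂ ^ n ⊓ J₂ ^ n := Ideal.Quotient.eq.1 hxc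
      have h7 : c - x ∈ (I₂ ⊓ J₂) ^ m :=
        hK₂ (by simpa [neg_sub] using (I₂ ^ n ⊓ J₂ ^ n).neg_mem h6)
      have hcx : c = x + (c - x) := by ring
      rw [hcx]
      exact Ideal.add_mem _ hxm h7
    · -- backward
      intro b hb d hd
      set g : A₂ →+* A₁ ⧸ (I₁ ^ n ⊓ J₁ ^ n) :=
        (χ n).symm.toRingHom.comp (Ideal.Quotient.mk (I₂ ^ n ⊓ J₂ ^ n)) with hgdef
      have hgapp : ∀ z : A₂, g z = (χ n).symm (Ideal.Quotient.mk (I₂ ^ n ⊓ J₂ ^ n) z) :=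
        fun z => rfl
      have step1 : Ideal.map g (I₂ ⊓ J₂) ≤
          Ideal.map (Ideal.Quotient.mk (I₁ ^ n ⊓ J₁ ^ n)) (I₁ ⊓ J₁) := by
        rw [Ideal.map_le_iff_le_comap]
        intro x hx
        rw [Ideal.mem_comap]
        obtain ⟨d₀, hd₀⟩ :=
          Ideal.Quotient.mk_surjective ((χ n).symm (Ideal.Quotient.mk (I₂ ^ n ⊓ J₂ ^ n) x))
        have hd₀m : d₀ ∈ I₁ ⊓ J₁ := memI₁ n (hN1 m) x hx d₀ hd₀.symm
        rw [hgapp, ← hd₀]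
        exact Ideal.mem_map_of_mem _ hd₀m
      have step2 : g b ∈ Ideal.map (Ideal.Quotient.mk (I₁ ^ n ⊓ J₁ ^ n)) ((I₁ ⊓ J₁) ^ m) := by
        have h4 : g b ∈ Ideal.map g ((I₂ ⊓ J₂) ^ m) := Ideal.mem_map_of_mem _ hb
        rw [Ideal.map_pow] at h4
        have h5 := Ideal.pow_right_mono step1 m h4
        rwa [← Ideal.map_pow] at h5
      rw [hgapp, hd] at step2
      obtain ⟨x, hxm, hxd⟩ := (Ideal.mem_map_iff_of_surjective _
        Ideal.Quotient.mk_surjective).1 step2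
      have h6 : x - d ∈ I₁ ^ n ⊓ J₁ ^ n := Ideal.Quotient.eq.1 hxd
      have h7 : d - x ∈ (I₁ ⊓ J₁) ^ m :=
        hK₁ (by simpa [neg_sub] using (I₁ ^ n ⊓ J₁ ^ n).neg_mem h6)
      have hdx : d = x + (d - x) := by ring
      rw [hdx]
      exact Ideal.add_mem _ hxm h7
  choose ψ hψ using hdesc
  -- elementwise description of ψ composed with reductions
  have hψV : ∀ (m : ℕ) (a : A₁) (c : A₂),
      χ (N m) (Ideal.Quotient.mk (I₁ ^ (N m) ⊓ J₁ ^ (N m)) a) =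
        Ideal.Quotient.mk (I₂ ^ (N m) ⊓ J₂ ^ (N m)) c →
      Ideal.Quotient.mk (I₂ ^ m) c = φV m (Ideal.Quotient.mk (I₁ ^ m) a) ∧
      Ideal.Quotient.mk (J₂ ^ m) c = φW m (Ideal.Quotient.mk (J₁ ^ m) a) := by
    intro m a c h
    obtain ⟨e1, e2⟩ := hχ (N m) a c h
    constructor
    · rw [← Ideal.Quotient.factor_mk (S := (I₂ ^ (N m))) (T := (I₂ ^ m))
        (Ideal.pow_le_pow_right (hNge m)) c, e1, towerGen φV hVtower (hNge m)]
    · rw [← Ideal.Quotient.factor_mk (S := (J₂ ^ (N m))) (T := (J₂ ^ m))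
        (Ideal.pow_le_pow_right (hNge m)) c, e2, towerGen φW hWtower (hNge m)]
  refine ⟨ψ, ?_, ?_, ?_⟩
  · -- the tower property
    intro m
    refine Ideal.Quotient.ringHom_ext (RingHom.ext fun a => ?_)
    simp only [RingHom.coe_comp, Function.comp_apply, RingEquiv.toRingHom_eq_coe,
      RingHom.coe_coe, Ideal.Quotient.factor_mk]
    obtain ⟨c', hc'⟩ := Ideal.Quotient.mk_surjective
      (χ (N (m + 1)) (Ideal.Quotient.mk (I₁ ^ (N (m + 1)) ⊓ J₁ ^ (N (m + 1))) a))
    obtain ⟨c, hc⟩ := Ideal.Quotient.mk_surjective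
      (χ (N m) (Ideal.Quotient.mk (I₁ ^ (N m) ⊓ J₁ ^ (N m)) a))
    rw [hψ (m + 1) a c' hc'.symm, hψ m a c hc.symm, Ideal.Quotient.factor_mk]
    -- show c' and c agree modulo (I₂ ⊓ J₂)^m
    have hmono : N m ≤ N (m + 1) := hNmono m (m + 1) (by omega)
    obtain ⟨e1', e2'⟩ := hχ (N (m + 1)) a c' hc'.symm
    obtain ⟨e1, e2⟩ := hχ (N m) a c hc.symm
    have hI : Ideal.Quotient.mk (I₂ ^ (N m)) c' = Ideal.Quotient.mk (I₂ ^ (N m)) c := by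
      rw [← Ideal.Quotient.factor_mk (S := (I₂ ^ (N (m + 1)))) (T := (I₂ ^ (N m)))
        (Ideal.pow_le_pow_right hmono) c', e1', towerGen φV hVtower hmono, e1]
    have hJ : Ideal.Quotient.mk (J₂ ^ (N m)) c' = Ideal.Quotient.mk (J₂ ^ (N m)) c := by
      rw [← Ideal.Quotient.factor_mk (S := (J₂ ^ (N (m + 1)))) (T := (J₂ ^ (N m)))
        (Ideal.pow_le_pow_right hmono) c', e2', towerGen φW hWtower hmono, e2]
    rw [Ideal.Quotient.eq]
    exact hN₂ m ⟨Ideal.Quotient.eq.1 hI, Ideal.Quotient.eq.1 hJ⟩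
  · -- restriction to φV
    intro m
    refine Ideal.Quotient.ringHom_ext (RingHom.ext fun a => ?_)
    simp only [RingHom.coe_comp, Function.comp_apply, RingEquiv.toRingHom_eq_coe,
      RingHom.coe_coe, Ideal.Quotient.factor_mk]
    obtain ⟨c, hc⟩ := Ideal.Quotient.mk_surjective
      (χ (N m) (Ideal.Quotient.mk (I₁ ^ (N m) ⊓ J₁ ^ (N m)) a))
    rw [hψ m a c hc.symm, Ideal.Quotient.factor_mk, (hψV m a c hc.symm).1]
  · -- restriction to φW
    intro m
    refine Ideal.Quotient.ringHom_ext (RingHom.ext fun a => ?_)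
    simp only [RingHom.coe_comp, Function.comp_apply, RingEquiv.toRingHom_eq_coe,
      RingHom.coe_coe, Ideal.Quotient.factor_mk]
    obtain ⟨c, hc⟩ := Ideal.Quotient.mk_surjective
      (χ (N m) (Ideal.Quotient.mk (I₁ ^ (N m) ⊓ J₁ ^ (N m)) a))
    rw [hψ m a c hc.symm, Ideal.Quotient.factor_mk, (hψV m a c hc.symm).2]
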